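/- Non-existence for the fully symmetric model: for N ≥ 4, suppose there exist positive reals λ_0, ..., λ_{N−1} with λ_N = 0, a differentiable function α and a continuous function β on (0, T] such that k α'(t) + (k(k−1)/2) β'(t) = (λ₀ − λ_k) + λ_{k−1} (k/(N−k+1)) e^{−α(t) − (k−1)β(t)} for all 1 ≤ k ≤ N and t ∈ (0,T], with α as the (non-constant) solution of α' = (λ₀−λ₁) + (λ₀/N)e^{−α} with e^{α(t)} → 0 as t → 0⁺. Then β(t) = 0 for all t; in particular β(T) = 0. -/

import Mathlib

open Real Set Filter Topology

/-- A continuous function on a preconnected set whose values are all roots of a fixed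
nonzero polynomial takes the same value at any two points. -/
lemma aux_poly_const {s : Set ℝ} (hs : IsPreconnected s) {f : ℝ → ℝ}
    (hf : ContinuousOn f s) {P : Polynomial ℝ} (hP : P ≠ 0)
    (hroot : ∀ t ∈ s, P.eval (f t) = 0) {u v : ℝ} (hu : u ∈ s) (hv : v ∈ s) :
    f u = f v := by
  have hfin : (f '' s).Finite := by
    refine Set.Finite.subset P.roots.toFinset.finite_toSet ?_
    rintro _ ⟨t, ht, rfl⟩
    simp only [Finset.coe_sort_coe, Multiset.mem_toFinset, Finset.mem_coe]
    exact (Polynomial.mem_roots hP).mpr (hroot t ht)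
  have hconn : IsPreconnected (f '' s) := hs.image f hf
  by_contra hne
  have key : ∀ a b : ℝ, a < b → a ∈ f '' s → b ∈ f '' s → False := by
    intro a b hab ha hb
    exact Set.Icc_infinite hab (hfin.subset (hconn.ordConnected.out ha hb))
  rcases lt_or_gt_of_ne hne with h | h
  · exact key _ _ h ⟨u, hu, rfl⟩ ⟨v, hv, rfl⟩
  · exact key _ _ h ⟨v, hv, rfl⟩ ⟨u, hu, rfl⟩

set_option maxHeartbeats 2000000 in
/-- Non-existence of time-homogeneous Markovian dynamics for the fully symmetric model
(Proposition 3.1): if α, β on (0,T] satisfy the displayed system of N ODEs with N ≥ 4,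
λ_ℓ > 0 for ℓ ≤ N−1, λ_N = 0, α the non-constant solution of
α' = (λ₀−λ₁) + (λ₀/N)e^{−α} with e^{α(t)} → 0 as t → 0⁺, then β ≡ 0 on (0,T]. -/
theorem model_I_no_markovian_dynamics
    (N : ℕ) (hN : 4 ≤ N) (T : ℝ) (hT : 0 < T)
    (lam : ℕ → ℝ) (hpos : ∀ ℓ : ℕ, ℓ ≤ N - 1 → 0 < lam ℓ) (hlamN : lam N = 0)
    (α β : ℝ → ℝ)
    (hα : ∀ t ∈ Ioc (0 : ℝ) T,
      HasDerivAt α ((lam 0 - lam 1) + (lam 0 / N) * exp (-α t)) t)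
    (hα0 : Tendsto (fun t => exp (α t)) (𝓝[>] (0 : ℝ)) (𝓝 0))
    (hαnc : ∃ s ∈ Ioc (0 : ℝ) T, ∃ t ∈ Ioc (0 : ℝ) T, α s ≠ α t)
    (hβcont : ContinuousOn β (Ioc (0 : ℝ) T))
    (hβdiff : ∀ t ∈ Ioc (0 : ℝ) T, DifferentiableAt ℝ β t)
    (hsys : ∀ k : ℕ, 1 ≤ k → k ≤ N → ∀ t ∈ Ioc (0 : ℝ) T,
      (k : ℝ) * deriv α t + ((k : ℝ) * ((k : ℝ) - 1) / 2) * deriv β t =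
        (lam 0 - lam k) +
          lam (k - 1) * ((k : ℝ) / ((N : ℝ) - k + 1)) *
            exp (-α t - ((k : ℝ) - 1) * β t)) :
    ∀ t ∈ Ioc (0 : ℝ) T, β t = 0 := by
  have hNr : (4:ℝ) ≤ (N:ℝ) := by exact_mod_cast hN
  set nr : ℝ := (N:ℝ) with hnr
  have hl0 : 0 < lam 0 := hpos 0 (by omega)
  have hl1 : 0 < lam 1 := hpos 1 (by omega)
  have hl2 : 0 < lam 2 := hpos 2 (by omega)
  have hlN1 : 0 < lam (N-1) := hpos (N-1) le_rfl
  have hcast : ((N-1 : ℕ) : ℝ) = nr - 1 := by rw [Nat.cast_sub (by omega)]; norm_num [hnr]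
  -- clean forms of the four equations we use
  have h1 : ∀ t ∈ Ioc (0:ℝ) T, deriv α t =
      (lam 0 - lam 1) + (lam 0 * (1/nr)) * exp (-α t) := by
    intro t ht
    have g := hsys 1 le_rfl (by omega) t ht
    push_cast at g
    have e : exp (-α t - (1-1) * β t) = exp (-α t) := by norm_num
    linear_combination g + (lam 0 * (1/(nr - 1 + 1))) * e
  have h2 : ∀ t ∈ Ioc (0:ℝ) T, 2 * deriv α t + deriv β t =
      (lam 0 - lam 2) + (lam 1 * (2/(nr-1))) * (exp (-α t) * exp (-β t)) := by
    intro t ht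
    have g := hsys 2 (by omega) (by omega) t ht
    push_cast at g
    have e : exp (-α t - (2-1) * β t) = exp (-α t) * exp (-β t) := by
      rw [← Real.exp_add]; congr 1; ring
    linear_combination g + (lam 1 * (2/(nr - 2 + 1))) * e
  have h3 : ∀ t ∈ Ioc (0:ℝ) T, 3 * deriv α t + 3 * deriv β t =
      (lam 0 - lam 3) + (lam 2 * (3/(nr-2))) * (exp (-α t) * exp (-β t)^2) := by
    intro t ht
    have g := hsys 3 (by omega) (by omega) t ht
    push_cast at g
    have e : exp (-α t - (3-1) * β t) = exp (-α t) * exp (-β t)^2 := by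
      rw [show -α t - (3-1) * β t = -α t + (2:ℕ) * (-β t) by push_cast; ring,
        Real.exp_add, Real.exp_nat_mul]
    linear_combination g + (lam 2 * (3/(nr - 3 + 1))) * e
  have hNe : ∀ t ∈ Ioc (0:ℝ) T, nr * deriv α t + (nr*(nr-1)/2) * deriv β t =
      (lam 0 - lam N) + (nr * lam (N-1)) * (exp (-α t) * exp (-β t)^(N-1)) := by
    intro t ht
    have g := hsys N (by omega) le_rfl t ht
    have e : exp (-α t - (nr-1) * β t) = exp (-α t) * exp (-β t)^(N-1) := by
      rw [show -α t - (nr-1) * β t = -α t + ((N-1:ℕ):ℝ) * (-β t) by rw [hcast]; ring,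
        Real.exp_add, Real.exp_nat_mul]
    linear_combination g + (lam (N-1) * (nr/(nr - nr + 1))) * e
  -- abbreviations for the constants
  set A1 : ℝ := lam 0 * (1/nr) with hA1
  set A2 : ℝ := lam 1 * (2/(nr-1)) with hA2
  set A3 : ℝ := lam 2 * (3/(nr-2)) with hA3
  set AN : ℝ := nr * lam (N-1) with hAN
  set M : ℝ := nr*(nr-1)/2 with hM
  set K3 : ℝ := 3*(lam 0 - lam 2) - (lam 0 - lam 3) - 3*(lam 0 - lam 1) with hK3
  set KN : ℝ := M*(lam 0 - lam 2) - (2*M - nr)*(lam 0 - lam 1) - (lam 0 - lam N) with hKN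
  -- eliminated identities: x·q(y) = K3 and x·p(y) = KN
  have hI3 : ∀ t ∈ Ioc (0:ℝ) T,
      exp (-α t) * (A3 * exp (-β t)^2 - 3*A2 * exp (-β t) + 3*A1) = K3 := by
    intro t ht
    linear_combination -(h3 t ht) + 3 * (h2 t ht) - 3 * (h1 t ht)
  have hIN : ∀ t ∈ Ioc (0:ℝ) T,
      exp (-α t) * (AN * exp (-β t)^(N-1) - M*A2 * exp (-β t) + (2*M - nr)*A1) = KN := by
    intro t ht
    linear_combination -(hNe t ht) + M * (h2 t ht) - (2*M - nr) * (h1 t ht)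
  -- positivity facts
  have hnr1 : (0:ℝ) < nr - 1 := by linarith
  have hnr2 : (0:ℝ) < nr - 2 := by linarith
  have hA3ne : A3 ≠ 0 := by
    have : 0 < A3 := by rw [hA3]; positivity
    exact ne_of_gt this
  have hANpos : 0 < AN := by
    rw [hAN]; exact mul_pos (by linarith) hlN1
  -- β is constant on (0,T]
  have hconst : ∀ s ∈ Ioc (0:ℝ) T, ∀ t ∈ Ioc (0:ℝ) T, β s = β t := by
    have hf : ContinuousOn (fun t => exp (-β t)) (Ioc (0:ℝ) T) :=
      Real.continuous_exp.comp_continuousOn hβcont.neg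
    have main : ∀ s ∈ Ioc (0:ℝ) T, ∀ t ∈ Ioc (0:ℝ) T, exp (-β s) = exp (-β t) := by
      by_cases hK : K3 = 0
      · -- q(y t) = 0 for all t
        set Q : Polynomial ℝ := Polynomial.C A3 * Polynomial.X^2
            - Polynomial.C (3*A2) * Polynomial.X + Polynomial.C (3*A1) with hQ
        have hQne : Q ≠ 0 := by
          intro h0
          have : Q.coeff 2 = A3 := by
            simp [hQ, Polynomial.coeff_X_pow, Polynomial.coeff_X, Polynomial.coeff_C]
          rw [h0] at this
          simp at this
          exact hA3ne this.symm
        intro s hs t ht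
        refine aux_poly_const isPreconnected_Ioc hf hQne ?_ hs ht
        intro u hu
        have h := hI3 u hu
        rw [hK] at h
        have hx : exp (-α u) ≠ 0 := (Real.exp_pos _).ne'
        have := (mul_eq_zero.mp h).resolve_left hx
        simp only [hQ, Polynomial.eval_add, Polynomial.eval_sub, Polynomial.eval_mul,
          Polynomial.eval_pow, Polynomial.eval_C, Polynomial.eval_X]
        linarith [this]
      · -- K3 ≠ 0 : use the combined polynomial of degree N-1
        set P : Polynomial ℝ := Polynomial.C K3 * (Polynomial.C AN * Polynomial.X^(N-1)
              - Polynomial.C (M*A2) * Polynomial.X + Polynomial.C ((2*M - nr)*A1))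
            - Polynomial.C KN * (Polynomial.C A3 * Polynomial.X^2
              - Polynomial.C (3*A2) * Polynomial.X + Polynomial.C (3*A1)) with hP
        have hPne : P ≠ 0 := by
          intro h0
          have e1 : ¬ ((N:ℕ)-1 = 0) := by omega
          have e2 : ¬ (1 = (N:ℕ)-1) := by omega
          have e3 : ¬ ((N:ℕ)-1 = 2) := by omega
          have hc : P.coeff (N-1) = K3 * AN := by
            simp [hP, Polynomial.coeff_X_pow, Polynomial.coeff_X, Polynomial.coeff_C,
              mul_assoc, Polynomial.coeff_C_mul, e1, e2, e3]
          rw [h0] at hc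
          simp only [Polynomial.coeff_zero] at hc
          rcases mul_eq_zero.mp hc.symm with h | h
          · exact hK h
          · exact hANpos.ne' h
        intro s hs t ht
        refine aux_poly_const isPreconnected_Ioc hf hPne ?_ hs ht
        intro u hu
        have ha := hI3 u hu
        have hb := hIN u hu
        have hx : exp (-α u) ≠ 0 := (Real.exp_pos _).ne'
        have key : exp (-α u) * (K3 * (AN * exp (-β u)^(N-1) - M*A2 * exp (-β u)
            + (2*M - nr)*A1) - KN * (A3 * exp (-β u)^2 - 3*A2 * exp (-β u) + 3*A1)) = 0 := by
          linear_combination K3 * hb - KN * ha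
        have hz := (mul_eq_zero.mp key).resolve_left hx
        simp only [hP, Polynomial.eval_add, Polynomial.eval_sub, Polynomial.eval_mul,
          Polynomial.eval_pow, Polynomial.eval_C, Polynomial.eval_X]
        linarith [hz]
    intro s hs t ht
    have := main s hs t ht
    have := Real.exp_eq_exp.mp this
    linarith
  -- find two interior points with different values of exp(α)
  have hT2 : T/2 ∈ Ioo (0:ℝ) T := ⟨by linarith, by linarith⟩
  obtain ⟨t1, ht1mem, ht1lt⟩ :
      ∃ t1, t1 ∈ Ioo (0:ℝ) (T/2) ∧ exp (α t1) < exp (α (T/2)) := by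
    have hev1 : ∀ᶠ t in 𝓝[>] (0:ℝ), exp (α t) < exp (α (T/2)) :=
      hα0.eventually_lt_const (Real.exp_pos _)
    have hev2 : Ioo (0:ℝ) (T/2) ∈ 𝓝[>] (0:ℝ) :=
      Ioo_mem_nhdsGT_of_mem ⟨le_refl _, by linarith⟩
    rcases (hev1.and (eventually_of_mem hev2 (fun t ht => ht))).exists with ⟨t1, h1', h2'⟩
    exact ⟨t1, h2', h1'⟩
  have ht1Ioo : t1 ∈ Ioo (0:ℝ) T := ⟨ht1mem.1, by linarith [ht1mem.2, hT2.2]⟩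
  have hxne : exp (-α t1) ≠ exp (-α (T/2)) := by
    intro h
    have : α t1 = α (T/2) := by
      have := Real.exp_eq_exp.mp h; linarith
    rw [this] at ht1lt; exact lt_irrefl _ ht1lt
  -- derivative of β vanishes at interior points
  have hderiv0 : ∀ t ∈ Ioo (0:ℝ) T, deriv β t = 0 := by
    intro t ht
    have hev : β =ᶠ[𝓝 t] (fun _ => β T) := by
      filter_upwards [isOpen_Ioo.mem_nhds ht] with s hs
      exact hconst s (Ioo_subset_Ioc_self hs) T ⟨hT, le_refl T⟩
    rw [hev.deriv_eq]
    exact deriv_const _ _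
  -- the value y0 of exp(-β) on (0,T]
  set y0 : ℝ := exp (-β T) with hy0
  have hyconst : ∀ t ∈ Ioc (0:ℝ) T, exp (-β t) = y0 := by
    intro t ht
    rw [hy0, hconst t ht T ⟨hT, le_refl T⟩]
  -- use k=2 and k=N equations at t1 and T/2
  have hmem1 : t1 ∈ Ioc (0:ℝ) T := Ioo_subset_Ioc_self ht1Ioo
  have hmem2 : (T/2) ∈ Ioc (0:ℝ) T := Ioo_subset_Ioc_self hT2
  set x1 : ℝ := exp (-α t1) with hx1
  set x2 : ℝ := exp (-α (T/2)) with hx2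
  have e2a : 2 * ((lam 0 - lam 1) + A1 * x1) = (lam 0 - lam 2) + A2 * (x1 * y0) := by
    have := h2 t1 hmem1
    rw [hderiv0 t1 ht1Ioo, hyconst t1 hmem1, h1 t1 hmem1] at this
    linear_combination this
  have e2b : 2 * ((lam 0 - lam 1) + A1 * x2) = (lam 0 - lam 2) + A2 * (x2 * y0) := by
    have := h2 (T/2) hmem2
    rw [hderiv0 (T/2) hT2, hyconst (T/2) hmem2, h1 (T/2) hmem2] at this
    linear_combination this
  have eNa : nr * ((lam 0 - lam 1) + A1 * x1) = (lam 0 - lam N) + AN * (x1 * y0^(N-1)) := by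
    have := hNe t1 hmem1
    rw [hderiv0 t1 ht1Ioo, hyconst t1 hmem1, h1 t1 hmem1] at this
    linear_combination this
  have eNb : nr * ((lam 0 - lam 1) + A1 * x2) = (lam 0 - lam N) + AN * (x2 * y0^(N-1)) := by
    have := hNe (T/2) hmem2
    rw [hderiv0 (T/2) hT2, hyconst (T/2) hmem2, h1 (T/2) hmem2] at this
    linear_combination this
  have hxsub : x1 - x2 ≠ 0 := sub_ne_zero_of_ne hxne
  -- coefficient elimination
  have hc2 : 2 * A1 = A2 * y0 := by
    have : (2 * A1 - A2 * y0) * (x1 - x2) = 0 := by linear_combination e2a - e2b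
    rcases mul_eq_zero.mp this with h | h
    · linarith
    · exact absurd h hxsub
  have hcN : nr * A1 = AN * y0^(N-1) := by
    have : (nr * A1 - AN * y0^(N-1)) * (x1 - x2) = 0 := by linear_combination eNa - eNb
    rcases mul_eq_zero.mp this with h | h
    · linarith
    · exact absurd h hxsub
  have hcons : nr * (lam 0 - lam 1) = lam 0 := by
    have h := eNa
    rw [hlamN] at h
    linear_combination h - x1 * hcN
  -- conclude y0 = 1
  have hy01 : y0 = 1 := by
    have hnr0 : nr ≠ 0 := by linarith
    have hnr1' : nr - 1 ≠ 0 := ne_of_gt hnr1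
    have h2' : 2 * (lam 0 * (1/nr)) = (lam 1 * (2/(nr-1))) * y0 := by
      rw [← hA1, ← hA2]; exact hc2
    have hlam1 : nr * lam 1 = (nr - 1) * lam 0 := by linarith [hcons]
    have hfact : (nr - 1) * lam 0 * (y0 - 1) = 0 := by
      field_simp at h2'
      linear_combination -y0 * hlam1 - h2'
    rcases mul_eq_zero.mp hfact with h | h
    · rcases mul_eq_zero.mp h with h' | h'
      · exact absurd h' hnr1'
      · exact absurd h' hl0.ne'
    · linarith
  have hβT : β T = 0 := by
    have : exp (-β T) = exp 0 := by rw [Real.exp_zero]; exact hy01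
    have := Real.exp_eq_exp.mp this
    linarith
  intro t ht
  rw [hconst t ht T ⟨hT, le_refl T⟩, hβT]
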